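/- Let n ≥ 1 and let α, β : Fin n → ℂ. Then min over all permutations σ of Fin n of max_{i} |α(i) − β(σ(i))| equals inf { r > 0 : for every open set U ⊆ ℂ, the number of indices i with α(i) ∈ U is at most the number of indices j with β(j) ∈ U_r, and the number of indices i with β(i) ∈ U is at most the number of indices j with α(j) ∈ U_r }, where U_r = { z ∈ ℂ : dist(z, U) < r } is the open r-neighbourhood of U. -/

import Mathlib

/-- The optimal matching distance between two lists `α, β` of `n` complex numbers
equals the ∞-Wasserstein distance between the associated counting measures:
`min_{σ ∈ Sₙ} max_i |α(i) − β(σ(i))|` equals the infimum of those `r > 0` such that,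
for every open `U ⊆ ℂ`, the number of points of each list lying in `U` is at most the
number of points of the other list lying in the open `r`-neighbourhood `U_r`. -/
theorem optimal_matching_eq_infWasserstein_counting
    (n : ℕ) (hn : 1 ≤ n) (α β : Fin n → ℂ) :
    (⨅ σ : Equiv.Perm (Fin n), ⨆ i : Fin n, ‖α i - β (σ i)‖)
      = sInf { r : ℝ | 0 < r ∧ ∀ U : Set ℂ, IsOpen U →
          {i : Fin n | α i ∈ U}.ncard ≤ {j : Fin n | β j ∈ Metric.thickening r U}.ncard ∧
          {i : Fin n | β i ∈ U}.ncard ≤ {j : Fin n | α j ∈ Metric.thickening r U}.ncard } := by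
  have hne : Nonempty (Fin n) := ⟨⟨0, hn⟩⟩
  set δ := ⨅ σ : Equiv.Perm (Fin n), ⨆ i : Fin n, ‖α i - β (σ i)‖ with hδdef
  set S := { r : ℝ | 0 < r ∧ ∀ U : Set ℂ, IsOpen U →
          {i : Fin n | α i ∈ U}.ncard ≤ {j : Fin n | β j ∈ Metric.thickening r U}.ncard ∧
          {i : Fin n | β i ∈ U}.ncard ≤ {j : Fin n | α j ∈ Metric.thickening r U}.ncard }
    with hSdef
  -- δ is nonnegative
  have hδ0 : 0 ≤ δ := le_ciInf fun σ => Real.iSup_nonneg fun i => norm_nonneg _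
  -- the infimum over permutations is attained
  obtain ⟨σ₀, hσ₀⟩ := Finite.exists_min
    (fun σ : Equiv.Perm (Fin n) => ⨆ i : Fin n, ‖α i - β (σ i)‖)
  have hσ₀δ : (⨆ i : Fin n, ‖α i - β (σ₀ i)‖) = δ :=
    le_antisymm (le_ciInf hσ₀) (ciInf_le (Finite.bddBelow_range _) σ₀)
  have hterm : ∀ i : Fin n, ‖α i - β (σ₀ i)‖ ≤ δ := by
    intro i
    rw [← hσ₀δ]
    exact le_ciSup (f := fun i => ‖α i - β (σ₀ i)‖) (Finite.bddAbove_range _) i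
  -- every r > δ belongs to S
  have hmemS : ∀ r : ℝ, δ < r → r ∈ S := by
    intro r hr
    refine ⟨lt_of_le_of_lt hδ0 hr, fun U hU => ⟨?_, ?_⟩⟩
    · refine Set.ncard_le_ncard_of_injOn (fun i => σ₀ i) (fun i hi => ?_)
        (fun a _ b _ h => σ₀.injective h) (Set.toFinite _)
      refine Metric.mem_thickening_iff.mpr ⟨α i, hi, ?_⟩
      calc dist (β (σ₀ i)) (α i) = ‖α i - β (σ₀ i)‖ := by
            rw [Complex.dist_eq, norm_sub_rev]
        _ ≤ δ := hterm i
        _ < r := hr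
    · refine Set.ncard_le_ncard_of_injOn (fun i => σ₀.symm i) (fun i hi => ?_)
        (fun a _ b _ h => σ₀.symm.injective h) (Set.toFinite _)
      refine Metric.mem_thickening_iff.mpr ⟨β i, hi, ?_⟩
      have := hterm (σ₀.symm i)
      rw [Equiv.apply_symm_apply] at this
      calc dist (α (σ₀.symm i)) (β i) = ‖α (σ₀.symm i) - β i‖ := Complex.dist_eq _ _
        _ ≤ δ := this
        _ < r := hr
  have hSne : S.Nonempty := ⟨δ + 1, hmemS _ (by linarith)⟩
  have hSbdd : BddBelow S := ⟨0, fun r hr => hr.1.le⟩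
  refine le_antisymm ?_ ?_
  · -- δ ≤ sInf S : Hall's marriage theorem direction
    refine le_csInf hSne fun r hr => ?_
    refine le_of_forall_pos_le_add fun ε hε => ?_
    classical
    -- Hall's condition for the relation dist (α i) (β j) < r + ε
    set t : Fin n → Finset (Fin n) :=
      fun i => Finset.univ.filter fun j => dist (α i) (β j) < r + ε with htdef
    have hall : ∀ s : Finset (Fin n), s.card ≤ (s.biUnion t).card := by
      intro s
      set U : Set ℂ := ⋃ i ∈ s, Metric.ball (α i) ε with hUdef
      have hUopen : IsOpen U := isOpen_biUnion fun i _ => Metric.isOpen_ball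
      have h1 : s.card ≤ {i : Fin n | α i ∈ U}.ncard := by
        rw [← Set.ncard_coe_finset s]
        refine Set.ncard_le_ncard (fun i hi => ?_) (Set.toFinite _)
        exact Set.mem_biUnion hi (Metric.mem_ball_self hε)
      have h2 : {j : Fin n | β j ∈ Metric.thickening r U} ⊆ ↑(s.biUnion t) := by
        intro j hj
        obtain ⟨z, hz, hdz⟩ := Metric.mem_thickening_iff.mp hj
        obtain ⟨i, hi, hzi⟩ := Set.mem_iUnion₂.mp hz
        simp only [Finset.coe_biUnion, Set.mem_iUnion, Finset.mem_coe, htdef,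
          Finset.mem_filter, Finset.mem_univ, true_and]
        refine ⟨i, hi, ?_⟩
        calc dist (α i) (β j) ≤ dist (α i) z + dist z (β j) := dist_triangle _ _ _
          _ = dist z (α i) + dist (β j) z := by rw [dist_comm (α i) z, dist_comm z (β j)]
          _ < ε + r := add_lt_add (Metric.mem_ball.mp hzi) hdz
          _ = r + ε := by ring
      calc s.card ≤ {i : Fin n | α i ∈ U}.ncard := h1
        _ ≤ {j : Fin n | β j ∈ Metric.thickening r U}.ncard := (hr.2 U hUopen).1
        _ ≤ (↑(s.biUnion t) : Set (Fin n)).ncard := Set.ncard_le_ncard h2 (Set.toFinite _)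
        _ = (s.biUnion t).card := Set.ncard_coe_finset _
    obtain ⟨f, hfinj, hft⟩ := (Finset.all_card_le_biUnion_card_iff_exists_injective t).mp hall
    let σ : Equiv.Perm (Fin n) := Equiv.ofBijective f (Finite.injective_iff_bijective.mp hfinj)
    have : δ ≤ ⨆ i : Fin n, ‖α i - β (σ i)‖ :=
      ciInf_le (Finite.bddBelow_range _) σ
    refine this.trans (ciSup_le fun i => ?_)
    have hfi := hft i
    simp only [htdef, Finset.mem_filter, Finset.mem_univ, true_and] at hfi
    have : σ i = f i := rfl
    rw [this, ← Complex.dist_eq]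
    exact hfi.le
  · -- sInf S ≤ δ
    refine le_of_forall_pos_le_add fun ε hε => ?_
    exact csInf_le hSbdd (hmemS (δ + ε) (by linarith))
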